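/- For every real a < -1, the matrix R = [[1, a],[1, 1]] admits a continuous driving function f with f(0) ≥ 0 for which the Skorokhod problem has two distinct solutions. -/

import Mathlib

open Set Matrix

/-- The Skorokhod problem on `[0,∞)` in the nonnegative quadrant of `ℝ²` with
reflection matrix `R` and driving function `f`: `(g, m)` is a solution. -/
def IsSkorokhod (R : Matrix (Fin 2) (Fin 2) ℝ) (f g m : ℝ → Fin 2 → ℝ) : Prop :=
  ContinuousOn g (Set.Ici 0) ∧ ContinuousOn m (Set.Ici 0) ∧
  (∀ t ∈ Set.Ici (0:ℝ), ∀ j, 0 ≤ g t j) ∧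
  m 0 = 0 ∧
  (∀ j, MonotoneOn (fun t => m t j) (Set.Ici 0)) ∧
  (∀ t ∈ Set.Ici (0:ℝ), g t = f t + R.mulVec (m t)) ∧
  (∀ j, ∀ s t, 0 ≤ s → s ≤ t → (∀ r ∈ Set.Icc s t, 0 < g r j) → m s j = m t j)

/-- Uniqueness of solutions of the Skorokhod problem with matrix `R`, for every
continuous driving function `f` with `f 0 ≥ 0`. -/
def SkorokhodUnique (R : Matrix (Fin 2) (Fin 2) ℝ) : Prop :=
  ∀ f : ℝ → Fin 2 → ℝ, ContinuousOn f (Set.Ici 0) → (∀ j, 0 ≤ f 0 j) →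
    ∀ g m g' m', IsSkorokhod R f g m → IsSkorokhod R f g' m' →
      ∀ t ∈ Set.Ici (0:ℝ), g t = g' t ∧ m t = m' t

namespace SkorokhodCE

noncomputable section

/-- Scale index: for `t ∈ (0,1]`, `KK l t = k` iff `l^(-k-1) < t ≤ l^(-k)`. -/
def KK (l t : ℝ) : ℤ := ⌊-Real.logb l t⌋

/-- Parity selector. -/
def cyc (k : ℤ) (E O : ℝ → ℝ) : ℝ → ℝ := if k % 2 = 0 then E else O

/-- The self-similar glue of base functions `E` (even cycles) and `O` (odd cycles). -/
def glue (l : ℝ) (E O : ℝ → ℝ) (t : ℝ) : ℝ :=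
  if t ≤ 0 then 0
  else if 1 ≤ t then E 1
  else l ^ (-KK l t) * cyc (KK l t) E O (l ^ KK l t * t)

variable {l : ℝ} {E O : ℝ → ℝ}

lemma cyc_even {k : ℤ} (h : k % 2 = 0) : cyc k E O = E := if_pos h

lemma cyc_odd {k : ℤ} (h : ¬ k % 2 = 0) : cyc k E O = O := if_neg h

lemma cyc_match (mE : E (1/l) = O 1 / l) (mO : O (1/l) = E 1 / l) (k : ℤ) :
    cyc k E O (1/l) = cyc (k+1) E O 1 / l := by
  by_cases h : k % 2 = 0
  · rw [cyc_even h, cyc_odd (show ¬ (k+1) % 2 = 0 by omega)]; exact mE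
  · rw [cyc_odd h, cyc_even (show (k+1) % 2 = 0 by omega)]; exact mO

lemma KK_spec (hl : 1 < l) {t : ℝ} (h0 : 0 < t) (h1 : t ≤ 1) :
    l ^ (-KK l t - 1) < t ∧ t ≤ l ^ (-KK l t) ∧ 0 ≤ KK l t := by
  have hl0 : (0:ℝ) < l := by linarith
  have hlne : l ≠ 1 := by intro h; rw [h] at hl; exact lt_irrefl 1 hl
  have hrw : l ^ Real.logb l t = t := Real.rpow_logb hl0 hlne h0
  have h2 : ((⌊-Real.logb l t⌋ : ℤ) : ℝ) ≤ -Real.logb l t := Int.floor_le _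
  have h3 : -Real.logb l t < (⌊-Real.logb l t⌋ : ℤ) + 1 := Int.lt_floor_add_one _
  refine ⟨?_, ?_, ?_⟩
  · have h4 : l ^ ((-KK l t - 1 : ℤ) : ℝ) < l ^ Real.logb l t := by
      apply (Real.rpow_lt_rpow_left_iff hl).2
      show ((-KK l t - 1 : ℤ) : ℝ) < _
      push_cast
      simp only [KK]
      push_cast
      linarith
    rw [hrw, Real.rpow_intCast] at h4; exact h4
  · have h4 : l ^ Real.logb l t ≤ l ^ ((-KK l t : ℤ) : ℝ) := by
      apply (Real.rpow_le_rpow_left_iff hl).2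
      show _ ≤ ((-KK l t : ℤ) : ℝ)
      push_cast
      simp only [KK]
      push_cast
      linarith
    rw [hrw, Real.rpow_intCast] at h4; exact h4
  · refine Int.floor_nonneg.2 ?_
    have : Real.logb l t ≤ 0 := Real.logb_nonpos hl (le_of_lt h0) h1
    linarith

lemma KK_eq (hl : 1 < l) {k : ℤ} {t : ℝ} (h1 : l ^ (-k-1) < t) (h2 : t ≤ l ^ (-k)) :
    KK l t = k := by
  have hl0 : (0:ℝ) < l := by linarith
  have hlne : l ≠ 1 := by intro h; rw [h] at hl; exact lt_irrefl 1 hl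
  have h0 : 0 < t := lt_trans (zpow_pos hl0 _) h1
  have e1 : Real.logb l t ≤ (-k : ℝ) := by
    have := Real.logb_le_logb_of_le hl h0 h2
    rw [← Real.rpow_intCast l (-k), Real.logb_rpow hl0 hlne] at this
    push_cast at this ⊢
    linarith
  have e2 : ((-k : ℝ) - 1) < Real.logb l t := by
    have := Real.logb_lt_logb hl (zpow_pos hl0 (-k-1)) h1
    rw [← Real.rpow_intCast l (-k-1), Real.logb_rpow hl0 hlne] at this
    push_cast at this ⊢
    linarith
  have : KK l t = k := by
    apply Int.floor_eq_iff.2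
    constructor
    · push_cast; linarith
    · push_cast; linarith
  exact this

lemma KK_antitone (hl : 1 < l) {s t : ℝ} (hs : 0 < s) (hst : s ≤ t) :
    KK l t ≤ KK l s := by
  apply Int.floor_mono
  simp only [neg_le_neg_iff]
  exact Real.logb_le_logb_of_le hl hs hst
lemma glue_nonpos {t : ℝ} (h : t ≤ 0) : glue l E O t = 0 := if_pos h

lemma glue_ge_one {t : ℝ} (h : 1 ≤ t) : glue l E O t = E 1 := by
  rw [glue, if_neg (by linarith), if_pos h]

lemma glue_eval (hl : 1 < l) {k : ℤ} (hk : 0 ≤ k) {s : ℝ} (hs1 : 1/l < s) (hs2 : s ≤ 1) :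
    glue l E O (l ^ (-k) * s) = l ^ (-k) * cyc k E O s := by
  have hl0 : (0:ℝ) < l := by linarith
  have hzp : (0:ℝ) < l ^ (-k) := zpow_pos hl0 _
  have hs0 : 0 < s := lt_trans (by positivity) hs1
  have ht0 : 0 < l ^ (-k) * s := mul_pos hzp hs0
  by_cases hge : 1 ≤ l ^ (-k) * s
  · have hk0 : k = 0 := by
      have h1 : l ^ (-k) * s ≤ l ^ (-k) := by nlinarith
      have h2 : (1:ℝ) ≤ l ^ (-k) := le_trans hge h1
      by_contra hne
      have hkpos : 0 < k := lt_of_le_of_ne hk (Ne.symm hne)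
      have hlt : l ^ (-k) < l ^ (0:ℤ) := by
        gcongr
        · omega
      rw [zpow_zero] at hlt
      linarith
    have hs1' : s = 1 := by
      apply le_antisymm hs2
      rw [hk0] at hge
      simpa using hge
    rw [hk0, hs1', show l ^ (-(0:ℤ)) * (1:ℝ) = 1 by simp]
    rw [glue_ge_one le_rfl, cyc_even (by norm_num)]
    simp
  · push_neg at hge
    have hKK : KK l (l ^ (-k) * s) = k := by
      apply KK_eq hl
      · have e : l ^ (-k-1) = l ^ (-k) * (1/l) := by
          rw [show (-k-1) = (-k) + (-1) by ring, zpow_add₀ (ne_of_gt hl0), _root_.zpow_neg_one, one_div]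
        rw [e]
        exact (mul_lt_mul_iff_right₀ hzp).2 hs1
      · calc l ^ (-k) * s ≤ l ^ (-k) * 1 := by nlinarith
          _ = l ^ (-k) := mul_one _
    rw [glue, if_neg (by linarith), if_neg (by linarith), hKK]
    congr 2
    rw [← mul_assoc, ← zpow_add₀ (ne_of_gt hl0)]
    simp

lemma glue_eval' (hl : 1 < l) {t : ℝ} (h0 : 0 < t) (h1 : t ≤ 1) :
    glue l E O t = l ^ (-KK l t) * cyc (KK l t) E O (l ^ KK l t * t) := by
  obtain ⟨b1, b2, b3⟩ := KK_spec (l := l) hl h0 h1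
  have hl0 : (0:ℝ) < l := by linarith
  have hzp : (0:ℝ) < l ^ KK l t := zpow_pos hl0 _
  have hs1 : 1/l < l ^ KK l t * t := by
    have := (mul_lt_mul_iff_right₀ hzp).2 b1
    rw [← zpow_add₀ (ne_of_gt hl0)] at this
    rw [show KK l t + (-KK l t - 1) = -1 by ring, _root_.zpow_neg_one, ← one_div] at this
    exact this
  have hs2 : l ^ KK l t * t ≤ 1 := by
    have := (mul_le_mul_iff_right₀ hzp).2 b2
    rw [← zpow_add₀ (ne_of_gt hl0)] at this
    rw [show KK l t + -KK l t = 0 by ring, zpow_zero] at this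
    exact this
  have heval := glue_eval (E := E) (O := O) hl b3 hs1 hs2
  rw [← mul_assoc, ← zpow_add₀ (ne_of_gt hl0), show -KK l t + KK l t = 0 by ring,
    zpow_zero, one_mul] at heval
  exact heval
lemma glue_piece (hl : 1 < l) (mE : E (1/l) = O 1 / l) (mO : O (1/l) = E 1 / l)
    {k : ℤ} (hk : 0 ≤ k) {t : ℝ} (h1 : l ^ (-k-1) ≤ t) (h2 : t ≤ l ^ (-k)) :
    glue l E O t = l ^ (-k) * cyc k E O (l ^ k * t) := by
  have hl0 : (0:ℝ) < l := by linarith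
  have hlne : l ≠ 0 := ne_of_gt hl0
  rcases eq_or_lt_of_le h1 with he | hlt
  · have e : t = l ^ (-(k+1)) * 1 := by rw [mul_one, ← he]; congr 1; ring
    have harg : l ^ k * t = 1/l := by
      rw [e, mul_one, ← zpow_add₀ hlne, show k + -(k+1) = -1 by ring, _root_.zpow_neg_one, one_div]
    rw [harg, cyc_match mE mO k]
    rw [e, glue_eval hl (by omega) (show 1/l < 1 by rw [div_lt_iff₀ hl0]; linarith) le_rfl,
      div_eq_mul_inv, ← _root_.zpow_neg_one (l), show -(k+1) = -k + -1 by ring,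
      zpow_add₀ hlne]
    ring
  · have hs1 : 1/l < l ^ k * t := by
      have := (mul_lt_mul_iff_right₀ (zpow_pos hl0 k)).2 hlt
      rwa [← zpow_add₀ hlne, show k + (-k-1) = -1 by ring, _root_.zpow_neg_one, ← one_div] at this
    have hs2 : l ^ k * t ≤ 1 := by
      have := (mul_le_mul_iff_right₀ (zpow_pos hl0 k)).2 h2
      rwa [← zpow_add₀ hlne, show k + -k = 0 by ring, zpow_zero] at this
    have harg : l ^ (-k) * (l ^ k * t) = t := by
      rw [← mul_assoc, ← zpow_add₀ hlne, show -k + k = 0 by ring, zpow_zero, one_mul]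
    calc glue l E O t = glue l E O (l ^ (-k) * (l ^ k * t)) := by rw [harg]
      _ = l ^ (-k) * cyc k E O (l ^ k * t) := glue_eval hl hk hs1 hs2

lemma glue_bound (hl : 1 < l) {C : ℝ} (hC : ∀ s ∈ Icc (1/l) 1, |E s| ≤ C ∧ |O s| ≤ C)
    {t : ℝ} (h0 : 0 ≤ t) (h1 : t ≤ 1) : |glue l E O t| ≤ C * l * t := by
  have hl0 : (0:ℝ) < l := by linarith
  rcases eq_or_lt_of_le h0 with he | ht0
  · rw [← he, glue_nonpos le_rfl]; simp
  obtain ⟨b1, b2, b3⟩ := KK_spec (l := l) hl ht0 h1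
  have hzp : (0:ℝ) < l ^ KK l t := zpow_pos hl0 _
  have hzn : (0:ℝ) < l ^ (-KK l t) := zpow_pos hl0 _
  have hs1 : 1/l ≤ l ^ KK l t * t := by
    have := (mul_lt_mul_iff_right₀ hzp).2 b1
    rw [← zpow_add₀ (ne_of_gt hl0), show KK l t + (-KK l t - 1) = -1 by ring,
      _root_.zpow_neg_one, ← one_div] at this
    linarith
  have hs2 : l ^ KK l t * t ≤ 1 := by
    have := (mul_le_mul_iff_right₀ hzp).2 b2
    rwa [← zpow_add₀ (ne_of_gt hl0), show KK l t + -KK l t = 0 by ring, zpow_zero] at this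
  have hcb : |cyc (KK l t) E O (l ^ KK l t * t)| ≤ C := by
    have := hC _ ⟨hs1, hs2⟩
    unfold cyc; split
    · exact this.1
    · exact this.2
  rw [glue_eval' hl ht0 h1, abs_mul, abs_of_pos hzn]
  have hls : l ^ (-KK l t) ≤ l * t := by
    have := (mul_lt_mul_iff_right₀ hl0).2 b1
    have e : l ^ (-KK l t) = l * l ^ (-KK l t - 1) := by
      have e2 := zpow_add₀ (ne_of_gt hl0) (1:ℤ) (-KK l t - 1)
      rw [zpow_one] at e2
      rw [show (1:ℤ) + (-KK l t - 1) = -KK l t from by ring] at e2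
      exact e2
    rw [← e] at this
    linarith
  have hCnn : 0 ≤ C := le_trans (abs_nonneg _) (hC (1/l) ⟨le_rfl, by rw [div_le_one hl0]; linarith⟩).1
  calc l ^ (-KK l t) * |cyc (KK l t) E O (l ^ KK l t * t)| ≤ (l * t) * C := by
        apply mul_le_mul hls hcb (abs_nonneg _) (by positivity)
    _ = C * l * t := by ring

lemma glue_continuousOn (hl : 1 < l) (hE : Continuous E) (hO : Continuous O)
    (mE : E (1/l) = O 1 / l) (mO : O (1/l) = E 1 / l) :
    ContinuousOn (glue l E O) (Ici 0) := by
  have hl0 : (0:ℝ) < l := by linarith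
  have hcyc : ∀ k : ℤ, Continuous (cyc k E O) := by
    intro k; unfold cyc; split
    · exact hE
    · exact hO
  have hpiece : ∀ k : ℤ, 0 ≤ k → ContinuousOn (glue l E O) (Icc (l ^ (-k-1)) (l ^ (-k))) := by
    intro k hk
    apply ContinuousOn.congr
      (f := fun t : ℝ => l ^ (-k) * cyc k E O (l ^ k * t))
    · exact (continuous_const.mul ((hcyc k).comp (continuous_const.mul continuous_id))).continuousOn
    · intro t ht; exact glue_piece hl mE mO hk ht.1 ht.2
  have hconst : ContinuousOn (glue l E O) (Ici 1) := by
    apply ContinuousOn.congr (f := fun _ : ℝ => E 1) continuousOn_const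
    intro t ht; exact glue_ge_one ht
  intro t0 ht0
  rcases eq_or_lt_of_le (show (0:ℝ) ≤ t0 from ht0) with h0 | h0
  · -- continuity at 0
    obtain ⟨CE, hCE⟩ := (isCompact_Icc (a := 1/l) (b := 1)).exists_bound_of_continuousOn
      hE.continuousOn
    obtain ⟨CO, hCO⟩ := (isCompact_Icc (a := 1/l) (b := 1)).exists_bound_of_continuousOn
      hO.continuousOn
    set C := max CE CO with hCdef
    have hC : ∀ s ∈ Icc (1/l) 1, |E s| ≤ C ∧ |O s| ≤ C := by
      intro s hs
      constructor
      · exact le_trans (hCE s hs) (le_max_left _ _)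
      · exact le_trans (hCO s hs) (le_max_right _ _)
    rw [ContinuousWithinAt, ← h0, glue_nonpos le_rfl]
    apply tendsto_of_tendsto_of_tendsto_of_le_of_le'
      (g := fun t : ℝ => -(C * l) * t) (h := fun t : ℝ => (C * l) * t)
    · have : Filter.Tendsto (fun t : ℝ => -(C * l) * t) (nhds 0) (nhds (-(C*l) * 0)) :=
        (continuous_const.mul continuous_id).tendsto 0
      simpa using this.mono_left nhdsWithin_le_nhds
    · have : Filter.Tendsto (fun t : ℝ => (C * l) * t) (nhds 0) (nhds ((C*l) * 0)) :=
        (continuous_const.mul continuous_id).tendsto 0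
      simpa using this.mono_left nhdsWithin_le_nhds
    · filter_upwards [self_mem_nhdsWithin,
        mem_nhdsWithin_of_mem_nhds (Iic_mem_nhds one_pos)] with t h1 h2
      have := glue_bound hl hC h1 h2
      have := abs_le.1 this
      linarith [this.1]
    · filter_upwards [self_mem_nhdsWithin,
        mem_nhdsWithin_of_mem_nhds (Iic_mem_nhds one_pos)] with t h1 h2
      have := glue_bound hl hC h1 h2
      have := abs_le.1 this
      linarith [this.2]
  · apply ContinuousAt.continuousWithinAt
    rcases lt_or_ge 1 t0 with hgt | hle
    · apply ContinuousAt.congr continuousAt_const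
      filter_upwards [Ioi_mem_nhds hgt] with t ht
      exact (glue_ge_one (le_of_lt ht)).symm
    · obtain ⟨b1, b2, b3⟩ := KK_spec (l := l) hl h0 hle
      set k := KK l t0 with hkdef
      rcases eq_or_lt_of_le b2 with heq | hlt2
      · have hleft : ContinuousWithinAt (glue l E O) (Icc (l ^ (-k-1)) (l ^ (-k))) t0 :=
          (hpiece k b3) t0 ⟨le_of_lt b1, b2⟩
        rcases eq_or_lt_of_le b3 with hk0 | hkpos
        · have ht01 : t0 = 1 := by rw [heq, ← hk0]; simp
          have hright : ContinuousWithinAt (glue l E O) (Ici 1) t0 :=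
            hconst t0 (show (1:ℝ) ≤ t0 by rw [ht01])
          apply (hleft.union hright).continuousAt
          apply Filter.mem_of_superset (Ioi_mem_nhds b1)
          intro x hx
          rcases le_or_gt x (l ^ (-k)) with h | h
          · exact Or.inl ⟨le_of_lt hx, h⟩
          · refine Or.inr ?_
            have : l ^ (-k) = 1 := by rw [← hk0]; simp
            rw [mem_Ici]; rw [this] at h; linarith
        · have hright : ContinuousWithinAt (glue l E O)
              (Icc (l ^ (-(k-1)-1)) (l ^ (-(k-1)))) t0 := by
            apply (hpiece (k-1) (by omega))
            constructor
            · rw [show -(k-1)-1 = -k by ring]; exact le_of_eq heq.symm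
            · rw [heq]; gcongr
              · linarith
              · omega
          apply (hleft.union hright).continuousAt
          have hup : t0 < l ^ (-(k-1)) := by
            rw [heq]; gcongr
            · linarith
          apply Filter.mem_of_superset (Ioo_mem_nhds b1 hup)
          intro x hx
          rcases le_or_gt x (l ^ (-k)) with h | h
          · exact Or.inl ⟨le_of_lt hx.1, h⟩
          · refine Or.inr ⟨?_, le_of_lt hx.2⟩
            rw [show -(k-1)-1 = -k by ring]
            exact le_of_lt h
      · exact (hpiece k b3).continuousAt (Icc_mem_nhds b1 hlt2)
lemma KK_arg_mem (hl : 1 < l) {t : ℝ} (h0 : 0 < t) (h1 : t ≤ 1) :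
    1/l < l ^ KK l t * t ∧ l ^ KK l t * t ≤ 1 := by
  have hl0 : (0:ℝ) < l := by linarith
  obtain ⟨b1, b2, _⟩ := KK_spec (l := l) hl h0 h1
  have hzp : (0:ℝ) < l ^ KK l t := zpow_pos hl0 _
  constructor
  · have := (mul_lt_mul_iff_right₀ hzp).2 b1
    rwa [← zpow_add₀ (ne_of_gt hl0), show KK l t + (-KK l t - 1) = -1 by ring,
      _root_.zpow_neg_one, ← one_div] at this
  · have := (mul_le_mul_iff_right₀ hzp).2 b2
    rwa [← zpow_add₀ (ne_of_gt hl0), show KK l t + -KK l t = 0 by ring, zpow_zero] at this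

lemma glue_nonneg (hl : 1 < l) (hEn : ∀ s ∈ Icc (1/l) 1, 0 ≤ E s)
    (hOn : ∀ s ∈ Icc (1/l) 1, 0 ≤ O s) {t : ℝ} (ht : 0 ≤ t) : 0 ≤ glue l E O t := by
  have hl0 : (0:ℝ) < l := by linarith
  rcases eq_or_lt_of_le ht with he | h0
  · rw [← he, glue_nonpos le_rfl]
  rcases le_or_gt t 1 with h1 | h1
  · rw [glue_eval' hl h0 h1]
    obtain ⟨c1, c2⟩ := KK_arg_mem hl h0 h1
    apply mul_nonneg (le_of_lt (zpow_pos hl0 _))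
    unfold cyc; split
    · exact hEn _ ⟨le_of_lt c1, c2⟩
    · exact hOn _ ⟨le_of_lt c1, c2⟩
  · rw [glue_ge_one (le_of_lt h1)]
    exact hEn 1 ⟨by rw [div_le_one hl0]; linarith, le_rfl⟩

lemma glue_monotoneOn (hl : 1 < l) (hEm : Monotone E) (hOm : Monotone O)
    (mE : E (1/l) = O 1 / l) (mO : O (1/l) = E 1 / l)
    (hEn : 0 ≤ E (1/l)) (hOn : 0 ≤ O (1/l)) :
    MonotoneOn (glue l E O) (Ici 0) := by
  have hl0 : (0:ℝ) < l := by linarith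
  have hlne : l ≠ 0 := ne_of_gt hl0
  have hinv : 1/l ≤ 1 := by rw [div_le_one hl0]; linarith
  have hcm : ∀ k : ℤ, Monotone (cyc k E O) := by
    intro k; unfold cyc; split
    · exact hEm
    · exact hOm
  have hcn : ∀ k : ℤ, 0 ≤ cyc k E O (1/l) := by
    intro k; unfold cyc; split
    · exact hEn
    · exact hOn
  set A : ℤ → ℝ := fun k => l ^ (-k) * cyc k E O 1 with hA
  have hAe : ∀ k : ℤ, A (k+1) = l ^ (-k) * cyc k E O (1/l) := by
    intro k
    rw [hA]; simp only
    rw [cyc_match mE mO k, show -(k+1) = -k + -1 by ring, zpow_add₀ hlne,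
      _root_.zpow_neg_one, div_eq_mul_inv]
    ring
  have hAstep : ∀ k : ℤ, A (k+1) ≤ A k := by
    intro k
    rw [hAe k]
    exact mul_le_mul_of_nonneg_left (hcm k hinv) (le_of_lt (zpow_pos hl0 _))
  have hAanti : ∀ j k : ℤ, j ≤ k → A k ≤ A j := by
    intro j k hjk
    exact Int.le_induction (motive := fun n _ => A n ≤ A j) le_rfl
      (fun n _ ih => le_trans (hAstep n) ih) k hjk
  have hAnn : ∀ k : ℤ, 0 ≤ A k :=
    fun k => mul_nonneg (zpow_pos hl0 _).le (le_trans (hcn k) (hcm k hinv))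
  have hA0 : A 0 = E 1 := by
    rw [hA]; simp only
    rw [cyc_even (by norm_num)]
    simp
  have key : ∀ t : ℝ, 0 < t → t ≤ 1 →
      A (KK l t + 1) ≤ glue l E O t ∧ glue l E O t ≤ A (KK l t) := by
    intro t h0 h1
    obtain ⟨c1, c2⟩ := KK_arg_mem hl h0 h1
    rw [glue_eval' hl h0 h1]
    constructor
    · rw [hAe]
      exact mul_le_mul_of_nonneg_left (hcm _ (le_of_lt c1)) (zpow_pos hl0 _).le
    · exact mul_le_mul_of_nonneg_left (hcm _ c2) (zpow_pos hl0 _).le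
  have mono_Ioc : ∀ s t : ℝ, 0 < s → s ≤ t → t ≤ 1 → glue l E O s ≤ glue l E O t := by
    intro s t hs hst ht1
    have ht0 : 0 < t := lt_of_lt_of_le hs hst
    have hkk : KK l t ≤ KK l s := KK_antitone hl hs hst
    rcases eq_or_lt_of_le hkk with heq | hlt
    · rw [glue_eval' hl hs (le_trans hst ht1), glue_eval' hl ht0 ht1, ← heq]
      apply mul_le_mul_of_nonneg_left _ (zpow_pos hl0 _).le
      exact hcm _ (mul_le_mul_of_nonneg_left hst (zpow_pos hl0 _).le)
    · calc glue l E O s ≤ A (KK l s) := (key s hs (le_trans hst ht1)).2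
        _ ≤ A (KK l t + 1) := hAanti _ _ (by omega)
        _ ≤ glue l E O t := (key t ht0 ht1).1
  intro s hs t ht hst
  rcases eq_or_lt_of_le (show (0:ℝ) ≤ s from hs) with h0 | h0
  · rw [← h0, glue_nonpos le_rfl]
    rcases eq_or_lt_of_le (show (0:ℝ) ≤ t from ht) with h0t | h0t
    · rw [← h0t, glue_nonpos le_rfl]
    · rcases le_or_gt t 1 with h1 | h1
      · exact le_trans (hAnn _) (key t h0t h1).1
      · rw [glue_ge_one h1.le, ← hA0]
        exact hAnn 0
  · rcases le_or_gt t 1 with h1 | h1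
    · exact mono_Ioc s t h0 hst h1
    · rcases le_or_gt s 1 with hs1 | hs1
      · have h2 : glue l E O s ≤ glue l E O 1 := mono_Ioc s 1 h0 hs1 le_rfl
        rw [glue_ge_one le_rfl] at h2
        rw [glue_ge_one h1.le]
        exact h2
      · rw [glue_ge_one hs1.le, glue_ge_one h1.le]
lemma pos_base (hl : 1 < l) {r : ℝ} (h0 : 0 < r) (h1 : r ≤ 1)
    (hp : 0 < glue l E O r) : 0 < cyc (KK l r) E O (l ^ KK l r * r) := by
  have hl0 : (0:ℝ) < l := by linarith
  rw [glue_eval' hl h0 h1] at hp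
  rcases mul_pos_iff.1 hp with ⟨_, h⟩ | ⟨h', _⟩
  · exact h
  · exact absurd (zpow_pos hl0 (-KK l r)) (not_lt.2 h'.le)

lemma glue_compl (hl : 1 < l) {gE gO mmE mmO : ℝ → ℝ}
    (mgE : gE (1/l) = gO 1 / l) (mgO : gO (1/l) = gE 1 / l)
    (mmE' : mmE (1/l) = mmO 1 / l) (mmO' : mmO (1/l) = mmE 1 / l)
    (hbE : ∀ σ τ : ℝ, 1/l ≤ σ → σ ≤ τ → τ ≤ 1 → 0 < gE σ → mmE σ = mmE τ)
    (hbO : ∀ σ τ : ℝ, 1/l ≤ σ → σ ≤ τ → τ ≤ 1 → 0 < gO σ → mmO σ = mmO τ)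
    (htop : gE 1 = 0 ∨ gO 1 = 0) :
    ∀ s t : ℝ, 0 ≤ s → s ≤ t → (∀ r ∈ Icc s t, 0 < glue l gE gO r) →
      glue l mmE mmO s = glue l mmE mmO t := by
  have hl0 : (0:ℝ) < l := by linarith
  have hlne : l ≠ 0 := ne_of_gt hl0
  have hinv1 : 1/l < 1 := by rw [div_lt_one hl0]; linarith
  have hbc : ∀ k : ℤ, ∀ σ τ : ℝ, 1/l ≤ σ → σ ≤ τ → τ ≤ 1 →
      0 < cyc k gE gO σ → cyc k mmE mmO σ = cyc k mmE mmO τ := by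
    intro k σ τ h1 h2 h3 h4
    by_cases hpar : k % 2 = 0
    · rw [cyc_even hpar] at h4 ⊢; exact hbE σ τ h1 h2 h3 h4
    · rw [cyc_odd hpar] at h4 ⊢; exact hbO σ τ h1 h2 h3 h4
  intro s t hs hst hpos
  rcases eq_or_lt_of_le hs with h0 | h0
  · exfalso
    have hmem : (0:ℝ) ∈ Icc s t := ⟨le_of_eq h0.symm, le_trans hs hst⟩
    have := hpos 0 hmem
    rw [glue_nonpos le_rfl] at this
    exact lt_irrefl 0 this
  rcases le_or_gt 1 s with hs1 | hs1
  · rw [glue_ge_one hs1, glue_ge_one (le_trans hs1 hst)]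
  · set t' := min t 1 with ht'
    have hst' : s ≤ t' := le_min hst (le_of_lt hs1)
    have ht'1 : t' ≤ 1 := min_le_right _ _
    have ht'0 : 0 < t' := lt_of_lt_of_le h0 hst'
    have hposs : ∀ r ∈ Icc s t', 0 < glue l gE gO r := fun r hr =>
      hpos r ⟨hr.1, le_trans hr.2 (min_le_left _ _)⟩
    have hred : glue l mmE mmO t = glue l mmE mmO t' := by
      rcases le_or_gt t 1 with h | h
      · rw [ht', min_eq_left h]
      · rw [ht', min_eq_right h.le, glue_ge_one h.le, glue_ge_one le_rfl]
    rw [hred]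
    have hks := KK_spec (l := l) hl h0 hs1.le
    have hkt := KK_spec (l := l) hl ht'0 ht'1
    have hkmono : KK l t' ≤ KK l s := KK_antitone hl h0 hst'
    have hps : 0 < cyc (KK l s) gE gO (l ^ KK l s * s) :=
      pos_base hl h0 hs1.le (hposs s ⟨le_rfl, hst'⟩)
    have hsmem := KK_arg_mem (l := l) hl h0 hs1.le
    have htmem := KK_arg_mem (l := l) hl ht'0 ht'1
    rcases eq_or_lt_of_le hkmono with heq | hlt
    · rw [glue_eval' hl h0 hs1.le, glue_eval' hl ht'0 ht'1, heq]
      congr 1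
      apply hbc (KK l s) _ _ (le_of_lt hsmem.1)
        (mul_le_mul_of_nonneg_left hst' (zpow_pos hl0 _).le) ?_ hps
      rw [← heq]
      exact htmem.2
    · set k := KK l s with hk
      set j := KK l t' with hj
      have hble : l ^ (-k) ≤ l ^ (-j-1) := by
        gcongr
        · linarith
        · omega
      have hb_in : l ^ (-k) ∈ Icc s t' := ⟨hks.2.1, le_trans hble (le_of_lt hkt.1)⟩
      have hevalb : ∀ (F G : ℝ → ℝ) (i : ℤ), 0 ≤ i →
          glue l F G (l ^ (-i)) = l ^ (-i) * cyc i F G 1 := by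
        intro F G i hi
        have := glue_eval (E := F) (O := G) (l := l) hl hi hinv1 le_rfl
        rwa [mul_one] at this
      have hptop : 0 < cyc k gE gO 1 := by
        have hpb := hposs _ hb_in
        rw [hevalb gE gO k hks.2.2] at hpb
        rcases mul_pos_iff.1 hpb with ⟨_, h⟩ | ⟨h', _⟩
        · exact h
        · exact absurd (zpow_pos hl0 (-k)) (not_lt.2 h'.le)
      have e1 : glue l mmE mmO s = glue l mmE mmO (l ^ (-k)) := by
        rw [glue_eval' hl h0 hs1.le, hevalb mmE mmO k hks.2.2]
        congr 1
        exact hbc k _ 1 (le_of_lt hsmem.1) hsmem.2 le_rfl hps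
      rcases eq_or_lt_of_le (show j + 1 ≤ k by omega) with heq2 | hlt2
      · have hpj : 0 < cyc j gE gO (1/l) := by
          rw [cyc_match mgE mgO j, heq2]
          exact div_pos hptop hl0
        have e2 : glue l mmE mmO (l ^ (-k)) = glue l mmE mmO t' := by
          rw [hevalb mmE mmO k hks.2.2, glue_eval' hl ht'0 ht'1]
          have em : cyc j mmE mmO (1/l) = cyc j mmE mmO (l ^ j * t') :=
            hbc j (1/l) _ le_rfl (le_of_lt htmem.1) htmem.2 hpj
          rw [← em, cyc_match mmE' mmO' j, heq2, div_eq_mul_inv, ← _root_.zpow_neg_one (l),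
            show -k = -j + -1 by omega, zpow_add₀ hlne]
          ring
        rw [e1, e2]
      · exfalso
        have hble2 : l ^ (-(k-1)) ≤ l ^ (-j-1) := by
          gcongr
          · linarith
          · omega
        have hble3 : l ^ (-k) ≤ l ^ (-(k-1)) := by
          gcongr
          · linarith
          · omega
        have hb2_in : l ^ (-(k-1)) ∈ Icc s t' :=
          ⟨le_trans hks.2.1 hble3, le_trans hble2 (le_of_lt hkt.1)⟩
        have hptop2 : 0 < cyc (k-1) gE gO 1 := by
          have hpb2 := hposs _ hb2_in
          rw [hevalb gE gO (k-1) (by omega)] at hpb2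
          rcases mul_pos_iff.1 hpb2 with ⟨_, h⟩ | ⟨h', _⟩
          · exact h
          · exact absurd (zpow_pos hl0 (-(k-1))) (not_lt.2 h'.le)
        have hboth : 0 < gE 1 ∧ 0 < gO 1 := by
          by_cases hpar : k % 2 = 0
          · rw [cyc_even hpar] at hptop
            rw [cyc_odd (show ¬ (k-1) % 2 = 0 by omega)] at hptop2
            exact ⟨hptop, hptop2⟩
          · rw [cyc_odd hpar] at hptop
            rw [cyc_even (show (k-1) % 2 = 0 by omega)] at hptop2
            exact ⟨hptop2, hptop⟩
        rcases htop with h | h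
        · rw [h] at hboth; exact lt_irrefl 0 hboth.1
        · rw [h] at hboth; exact lt_irrefl 0 hboth.2
/-! ### The base-cycle functions -/

def pp (l : ℝ) : ℝ := 2/(l-1)
def sst (l : ℝ) : ℝ := (1+l)/(2*l)
def ww (l : ℝ) : ℝ := 1/(l*(l-1))
def v2 (l : ℝ) : ℝ := ww l/(1+l)
def v1 (l : ℝ) : ℝ := l * v2 l

def gP1 (l s : ℝ) : ℝ := pp l * max 0 (sst l - s)
def gQ1 (l s : ℝ) : ℝ := l * pp l * max 0 (s - sst l)
def gQ2 (l s : ℝ) : ℝ := pp l * min (s - 1/l) (1 - s)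
def mP2 (l s : ℝ) : ℝ := v2 l + pp l * max 0 (s - sst l)
def mQ1 (l s : ℝ) : ℝ := v2 l + pp l * (min s (sst l) - 1/l)
def FF1 (l s : ℝ) : ℝ := gP1 l s + gQ1 l s
def FF2 (l s : ℝ) : ℝ := -(ww l) - pp l * max 0 (s - sst l)
def cv1 (l : ℝ) : ℝ → ℝ := fun _ => v1 l
def zf : ℝ → ℝ := fun _ => 0

section BaseFacts

variable {l : ℝ} (hl : 1 < l)
include hl

lemma hl0 : (0:ℝ) < l := by linarith
lemma hlne : l ≠ 0 := by intro h; rw [h] at hl; linarith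
lemma hlm1 : l - 1 ≠ 0 := by
  intro h
  have h2 : l = 1 := by linarith
  rw [h2] at hl
  exact lt_irrefl 1 hl
lemma hlp1 : 1 + l ≠ 0 := by
  intro h
  have h2 : l = -1 := by linarith
  rw [h2] at hl
  norm_num at hl
lemma pp_pos : 0 < pp l := div_pos (by norm_num) (by linarith)
lemma ww_pos : 0 < ww l := div_pos one_pos (mul_pos (by linarith) (by linarith))
lemma v2_pos : 0 < v2 l := div_pos (ww_pos hl) (by linarith)
lemma v1_pos : 0 < v1 l := mul_pos (by linarith) (v2_pos hl)
lemma inv_lt1 : 1/l < 1 := by rw [div_lt_one (hl0 hl)]; exact hl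
lemma inv_pos' : 0 < 1/l := by have := hl0 hl; positivity
lemma sst_lb : 1/l < sst l := by
  unfold sst
  rw [div_lt_div_iff₀ (hl0 hl) (by linarith)]
  nlinarith [mul_pos (hl0 hl) (show (0:ℝ) < l - 1 by linarith)]
lemma sst_ub : sst l < 1 := by
  unfold sst; rw [div_lt_one (by linarith)]; linarith
lemma key1 : pp l * (sst l - 1/l) = 1/l := by
  have h0 := hlne hl; have h1 := hlm1 hl
  unfold pp sst; field_simp; ring
lemma key2 : pp l * (1 - sst l) = 1/l := by
  have h0 := hlne hl; have h1 := hlm1 hl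
  unfold pp sst; field_simp; ring
lemma sst2x : 2 * sst l = 1 + 1/l := by
  have h0 := hlne hl
  unfold sst; field_simp; ring
lemma sumv : v1 l + v2 l = ww l := by
  have h0 := hlne hl; have h1 := hlm1 hl; have h2 := hlp1 hl
  unfold v1 v2; field_simp; ring
lemma lv1 : l * v1 l = v2 l + 1/l := by
  have h0 := hlne hl; have h1 := hlm1 hl; have h2 := hlp1 hl
  unfold v1 v2 ww; field_simp; ring

/-! ### endpoint values -/

lemma val_gP1_inv : gP1 l (1/l) = 1/l := by
  unfold gP1; rw [max_eq_right (sub_nonneg.2 (le_of_lt (sst_lb hl)))]; exact key1 hl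
lemma val_gP1_one : gP1 l 1 = 0 := by
  unfold gP1; rw [max_eq_left (sub_nonpos.2 (le_of_lt (sst_ub hl)))]; exact mul_zero _
lemma val_gQ1_inv : gQ1 l (1/l) = 0 := by
  unfold gQ1; rw [max_eq_left (sub_nonpos.2 (le_of_lt (sst_lb hl)))]; exact mul_zero _
lemma val_gQ1_one : gQ1 l 1 = 1 := by
  unfold gQ1
  rw [max_eq_right (sub_nonneg.2 (le_of_lt (sst_ub hl))), mul_assoc, key2 hl]
  field_simp
lemma val_gQ2_inv : gQ2 l (1/l) = 0 := by
  unfold gQ2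
  rw [sub_self, min_eq_left (sub_nonneg.2 (le_of_lt (inv_lt1 hl)))]
  exact mul_zero _
lemma val_gQ2_one : gQ2 l 1 = 0 := by
  unfold gQ2
  rw [sub_self, min_eq_right (sub_nonneg.2 (le_of_lt (inv_lt1 hl)))]
  exact mul_zero _
lemma val_mQ1_inv : mQ1 l (1/l) = v2 l := by
  unfold mQ1; rw [min_eq_left (le_of_lt (sst_lb hl)), sub_self, mul_zero, add_zero]
lemma val_mQ1_one : mQ1 l 1 = v2 l + 1/l := by
  unfold mQ1; rw [min_eq_right (le_of_lt (sst_ub hl)), key1 hl]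
lemma val_mP2_inv : mP2 l (1/l) = v2 l := by
  unfold mP2
  rw [max_eq_left (sub_nonpos.2 (le_of_lt (sst_lb hl))), mul_zero, add_zero]
lemma val_mP2_one : mP2 l 1 = v2 l + 1/l := by
  unfold mP2
  rw [max_eq_right (sub_nonneg.2 (le_of_lt (sst_ub hl))), key2 hl]
lemma val_FF2_inv : FF2 l (1/l) = -(ww l) := by
  unfold FF2
  rw [max_eq_left (sub_nonpos.2 (le_of_lt (sst_lb hl))), mul_zero, sub_zero]
lemma val_FF2_one : FF2 l 1 = -(ww l) - 1/l := by
  unfold FF2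
  rw [max_eq_right (sub_nonneg.2 (le_of_lt (sst_ub hl))), key2 hl]

/-! ### matching conditions -/

lemma match_gP1 : gP1 l (1/l) = gQ1 l 1 / l := by
  rw [val_gP1_inv hl, val_gQ1_one hl]
lemma match_gQ1 : gQ1 l (1/l) = gP1 l 1 / l := by
  rw [val_gQ1_inv hl, val_gP1_one hl, zero_div]
lemma match_zf_gQ2 : zf (1/l) = gQ2 l 1 / l := by
  rw [val_gQ2_one hl, zero_div]; rfl
lemma match_gQ2_zf : gQ2 l (1/l) = zf 1 / l := by
  rw [val_gQ2_inv hl]; show (0:ℝ) = 0 / l; rw [zero_div]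
lemma match_cv1_mQ1 : cv1 l (1/l) = mQ1 l 1 / l := by
  rw [val_mQ1_one hl]
  show v1 l = _
  rw [eq_div_iff (hlne hl)]
  have := lv1 hl; linarith
lemma match_mQ1_cv1 : mQ1 l (1/l) = cv1 l 1 / l := by
  rw [val_mQ1_inv hl]
  show v2 l = v1 l / l
  rw [eq_div_iff (hlne hl)]
  unfold v1; ring
lemma match_mP2_cv1 : mP2 l (1/l) = cv1 l 1 / l := by
  rw [val_mP2_inv hl]
  show v2 l = v1 l / l
  rw [eq_div_iff (hlne hl)]
  unfold v1; ring
lemma match_cv1_mP2 : cv1 l (1/l) = mP2 l 1 / l := by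
  rw [val_mP2_one hl]
  show v1 l = _
  rw [eq_div_iff (hlne hl)]
  have := lv1 hl; linarith
lemma match_FF1 : FF1 l (1/l) = FF1 l 1 / l := by
  unfold FF1
  rw [val_gP1_inv hl, val_gQ1_one hl, val_gP1_one hl, val_gQ1_inv hl]
  ring
lemma match_FF2 : FF2 l (1/l) = FF2 l 1 / l := by
  rw [val_FF2_inv hl, val_FF2_one hl, eq_div_iff (hlne hl)]
  have h0 := hlne hl; have h1 := hlm1 hl
  unfold ww
  field_simp
  ring

end BaseFacts
/-! ### base identities, continuity, monotonicity, complementarity -/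

section BaseFacts2

variable {l : ℝ} (hl : 1 < l)
include hl

lemma bid1P (s : ℝ) : gP1 l s = FF1 l s + (cv1 l s + (-l) * mP2 l s) := by
  unfold FF1 gP1 gQ1 mP2 cv1 v1
  ring

lemma bid2P (s : ℝ) : zf s = FF2 l s + (cv1 l s + mP2 l s) := by
  unfold zf FF2 mP2 cv1
  linarith [sumv hl]

lemma bid1Q (s : ℝ) : gQ1 l s = FF1 l s + (mQ1 l s + (-l) * cv1 l s) := by
  have hk1 := key1 hl
  have hlv := lv1 hl
  unfold FF1 gP1 gQ1 mQ1 cv1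
  rcases le_total s (sst l) with h | h
  · rw [max_eq_right (sub_nonneg.2 h), min_eq_left h, max_eq_left (sub_nonpos.2 h)]
    linear_combination hlv - hk1
  · rw [max_eq_left (show sst l - s ≤ 0 by linarith), min_eq_right h,
      max_eq_right (show (0:ℝ) ≤ s - sst l from sub_nonneg.2 h)]
    linear_combination hlv - hk1

lemma bid2Q (s : ℝ) : gQ2 l s = FF2 l s + (mQ1 l s + cv1 l s) := by
  have hk1 := key1 hl
  have hk2 := key2 hl
  have hs2 := sst2x hl
  have hsum := sumv hl
  unfold gQ2 FF2 mQ1 cv1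
  rcases le_total s (sst l) with h | h
  · rw [min_eq_left (by linarith), min_eq_left h, max_eq_left (sub_nonpos.2 h)]
    linear_combination - hsum
  · rw [min_eq_right (by linarith), min_eq_right h, max_eq_right (sub_nonneg.2 h)]
    linear_combination hk2 - hk1 - hsum

omit hl

lemma cont_gP1 : Continuous (gP1 l) :=
  continuous_const.mul (continuous_const.max (continuous_const.sub continuous_id))
lemma cont_gQ1 : Continuous (gQ1 l) :=
  continuous_const.mul (continuous_const.max (continuous_id.sub continuous_const))
lemma cont_gQ2 : Continuous (gQ2 l) :=
  continuous_const.mul ((continuous_id.sub continuous_const).min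
    (continuous_const.sub continuous_id))
lemma cont_mP2 : Continuous (mP2 l) :=
  continuous_const.add (continuous_const.mul
    (continuous_const.max (continuous_id.sub continuous_const)))
lemma cont_mQ1 : Continuous (mQ1 l) :=
  continuous_const.add (continuous_const.mul
    ((continuous_id.min continuous_const).sub continuous_const))
lemma cont_FF1 : Continuous (FF1 l) := cont_gP1.add cont_gQ1
lemma cont_FF2 : Continuous (FF2 l) :=
  continuous_const.sub (continuous_const.mul
    (continuous_const.max (continuous_id.sub continuous_const)))
lemma cont_cv1 : Continuous (cv1 l) := continuous_const
lemma cont_zf : Continuous zf := continuous_const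

include hl

lemma mono_mP2 : Monotone (mP2 l) := by
  intro x y hxy
  unfold mP2
  have h : max 0 (x - sst l) ≤ max 0 (y - sst l) := max_le_max le_rfl (by linarith)
  have := mul_le_mul_of_nonneg_left h (le_of_lt (pp_pos hl))
  linarith

lemma mono_mQ1 : Monotone (mQ1 l) := by
  intro x y hxy
  unfold mQ1
  have h : min x (sst l) ≤ min y (sst l) := min_le_min hxy le_rfl
  have := mul_le_mul_of_nonneg_left (show min x (sst l) - 1/l ≤ min y (sst l) - 1/l by linarith)
    (le_of_lt (pp_pos hl))
  linarith

omit hl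
lemma mono_cv1 : Monotone (cv1 l) := monotone_const
include hl

lemma nonneg_gP1 : ∀ s ∈ Icc (1/l) 1, 0 ≤ gP1 l s :=
  fun s _ => mul_nonneg (le_of_lt (pp_pos hl)) (le_max_left _ _)

lemma nonneg_gQ1 : ∀ s ∈ Icc (1/l) 1, 0 ≤ gQ1 l s :=
  fun s _ => mul_nonneg (by have := pp_pos hl; have := hl0 hl; positivity) (le_max_left _ _)

lemma nonneg_gQ2 : ∀ s ∈ Icc (1/l) 1, 0 ≤ gQ2 l s := by
  intro s hs
  apply mul_nonneg (le_of_lt (pp_pos hl))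
  apply le_min
  · linarith [hs.1]
  · linarith [hs.2]

omit hl
lemma nonneg_zf : ∀ s ∈ Icc (1/l) 1, (0:ℝ) ≤ zf s := fun _ _ => le_rfl
include hl

lemma compl_gQ1_mQ1 : ∀ σ τ : ℝ, 1/l ≤ σ → σ ≤ τ → τ ≤ 1 → 0 < gQ1 l σ →
    mQ1 l σ = mQ1 l τ := by
  intro σ τ h1 h2 h3 h4
  have hσ : sst l < σ := by
    by_contra hcon
    push_neg at hcon
    unfold gQ1 at h4
    rw [max_eq_left (sub_nonpos.2 hcon), mul_zero] at h4
    exact lt_irrefl 0 h4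
  unfold mQ1
  rw [min_eq_right (le_of_lt hσ), min_eq_right (by linarith)]

omit hl

lemma compl_const {F : ℝ → ℝ} : ∀ σ τ : ℝ, 1/l ≤ σ → σ ≤ τ → τ ≤ 1 → 0 < F σ →
    cv1 l σ = cv1 l τ := fun _ _ _ _ _ _ => rfl

lemma compl_zf_absurd {M : ℝ → ℝ} : ∀ σ τ : ℝ, 1/l ≤ σ → σ ≤ τ → τ ≤ 1 → 0 < zf σ →
    M σ = M τ := by
  intro σ τ _ _ _ h
  exact absurd h (by unfold zf; exact lt_irrefl 0)

end BaseFacts2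

lemma glue_identity {l : ℝ} (hl : 1 < l) {E1 O1 E2 O2 E3 O3 E4 O4 : ℝ → ℝ} (c : ℝ)
    (hbE : ∀ s : ℝ, E1 s = E2 s + (E3 s + c * E4 s))
    (hbO : ∀ s : ℝ, O1 s = O2 s + (O3 s + c * O4 s)) (t : ℝ) :
    glue l E1 O1 t = glue l E2 O2 t + (glue l E3 O3 t + c * glue l E4 O4 t) := by
  rcases le_or_gt t 0 with h | h
  · rw [glue_nonpos h, glue_nonpos h, glue_nonpos h, glue_nonpos h]; ring
  rcases le_or_gt t 1 with h1 | h1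
  · rw [glue_eval' hl h h1, glue_eval' hl h h1, glue_eval' hl h h1, glue_eval' hl h h1]
    by_cases hpar : (KK l t) % 2 = 0
    · simp only [cyc_even hpar]
      rw [hbE]; ring
    · simp only [cyc_odd hpar]
      rw [hbO]; ring
  · rw [glue_ge_one h1.le, glue_ge_one h1.le, glue_ge_one h1.le, glue_ge_one h1.le, hbE 1]
/-! ### the two solutions -/

def fv (l : ℝ) (t : ℝ) : Fin 2 → ℝ := ![glue l (FF1 l) (FF1 l) t, glue l (FF2 l) (FF2 l) t]
def gX (l : ℝ) (t : ℝ) : Fin 2 → ℝ := ![glue l (gP1 l) (gQ1 l) t, glue l zf (gQ2 l) t]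
def mX (l : ℝ) (t : ℝ) : Fin 2 → ℝ := ![glue l (cv1 l) (mQ1 l) t, glue l (mP2 l) (cv1 l) t]
def gY (l : ℝ) (t : ℝ) : Fin 2 → ℝ := ![glue l (gQ1 l) (gP1 l) t, glue l (gQ2 l) zf t]
def mY (l : ℝ) (t : ℝ) : Fin 2 → ℝ := ![glue l (mQ1 l) (cv1 l) t, glue l (cv1 l) (mP2 l) t]

lemma mv (a : ℝ) (v : Fin 2 → ℝ) :
    (!![1, a; 1, 1]).mulVec v = ![v 0 + a * v 1, v 0 + v 1] := by
  funext j; fin_cases j <;> simp [Matrix.mulVec, dotProduct, Fin.sum_univ_two]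

lemma skX {l : ℝ} (hl : 1 < l) : IsSkorokhod !![1, -l; 1, 1] (fv l) (gX l) (mX l) := by
  refine ⟨?_, ?_, ?_, ?_, ?_, ?_, ?_⟩
  · apply continuousOn_pi.2
    intro i; fin_cases i
    · simpa [gX] using glue_continuousOn hl cont_gP1 cont_gQ1 (match_gP1 hl) (match_gQ1 hl)
    · simpa [gX] using glue_continuousOn hl cont_zf cont_gQ2 (match_zf_gQ2 hl) (match_gQ2_zf hl)
  · apply continuousOn_pi.2
    intro i; fin_cases i
    · simpa [mX] using glue_continuousOn hl cont_cv1 cont_mQ1 (match_cv1_mQ1 hl) (match_mQ1_cv1 hl)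
    · simpa [mX] using glue_continuousOn hl cont_mP2 cont_cv1 (match_mP2_cv1 hl) (match_cv1_mP2 hl)
  · intro t ht j
    fin_cases j
    · simpa [gX] using glue_nonneg hl (nonneg_gP1 hl) (nonneg_gQ1 hl) ht
    · simpa [gX] using glue_nonneg hl nonneg_zf (nonneg_gQ2 hl) ht
  · funext j; fin_cases j <;> simp [mX, glue_nonpos (le_refl (0:ℝ))]
  · intro j
    fin_cases j
    · simp only [mX, Matrix.cons_val_zero]
      exact glue_monotoneOn hl mono_cv1 (mono_mQ1 hl) (match_cv1_mQ1 hl) (match_mQ1_cv1 hl)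
        (le_of_lt (v1_pos hl)) (by rw [val_mQ1_inv hl]; exact le_of_lt (v2_pos hl))
    · simp only [mX, Matrix.cons_val_one, Matrix.head_cons]
      exact glue_monotoneOn hl (mono_mP2 hl) mono_cv1 (match_mP2_cv1 hl) (match_cv1_mP2 hl)
        (by rw [val_mP2_inv hl]; exact le_of_lt (v2_pos hl)) (le_of_lt (v1_pos hl))
  · intro t ht
    rw [mv (-l) (mX l t)]
    funext j; fin_cases j
    · show glue l (gP1 l) (gQ1 l) t
        = glue l (FF1 l) (FF1 l) t + (glue l (cv1 l) (mQ1 l) t + -l * glue l (mP2 l) (cv1 l) t)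
      exact glue_identity hl (-l) (bid1P hl) (bid1Q hl) t
    · show glue l zf (gQ2 l) t
        = glue l (FF2 l) (FF2 l) t + (glue l (cv1 l) (mQ1 l) t + glue l (mP2 l) (cv1 l) t)
      have e1 : ∀ s : ℝ, zf s = FF2 l s + (cv1 l s + 1 * mP2 l s) := by
        intro s; rw [one_mul]; exact bid2P hl s
      have e2 : ∀ s : ℝ, gQ2 l s = FF2 l s + (mQ1 l s + 1 * cv1 l s) := by
        intro s; rw [one_mul]; exact bid2Q hl s
      have h := glue_identity hl 1 e1 e2 t
      rw [h]; ring
  · intro j s t hs hst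
    fin_cases j
    · intro hpos
      have hpos' : ∀ r ∈ Icc s t, 0 < glue l (gP1 l) (gQ1 l) r := by
        intro r hr
        have := hpos r hr
        simpa [gX] using this
      have := glue_compl hl (match_gP1 hl) (match_gQ1 hl) (match_cv1_mQ1 hl) (match_mQ1_cv1 hl)
        (fun _ _ _ _ _ _ => rfl) (compl_gQ1_mQ1 hl) (Or.inl (val_gP1_one hl)) s t hs hst hpos'
      simpa [mX] using this
    · intro hpos
      have hpos' : ∀ r ∈ Icc s t, 0 < glue l zf (gQ2 l) r := by
        intro r hr
        have := hpos r hr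
        simpa [gX] using this
      have := glue_compl hl (match_zf_gQ2 hl) (match_gQ2_zf hl) (match_mP2_cv1 hl)
        (match_cv1_mP2 hl) compl_zf_absurd (fun _ _ _ _ _ _ => rfl)
        (Or.inl rfl) s t hs hst hpos'
      simpa [mX] using this

lemma skY {l : ℝ} (hl : 1 < l) : IsSkorokhod !![1, -l; 1, 1] (fv l) (gY l) (mY l) := by
  refine ⟨?_, ?_, ?_, ?_, ?_, ?_, ?_⟩
  · apply continuousOn_pi.2
    intro i; fin_cases i
    · simpa [gY] using glue_continuousOn hl cont_gQ1 cont_gP1 (match_gQ1 hl) (match_gP1 hl)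
    · simpa [gY] using glue_continuousOn hl cont_gQ2 cont_zf (match_gQ2_zf hl) (match_zf_gQ2 hl)
  · apply continuousOn_pi.2
    intro i; fin_cases i
    · simpa [mY] using glue_continuousOn hl cont_mQ1 cont_cv1 (match_mQ1_cv1 hl) (match_cv1_mQ1 hl)
    · simpa [mY] using glue_continuousOn hl cont_cv1 cont_mP2 (match_cv1_mP2 hl) (match_mP2_cv1 hl)
  · intro t ht j
    fin_cases j
    · simpa [gY] using glue_nonneg hl (nonneg_gQ1 hl) (nonneg_gP1 hl) ht
    · simpa [gY] using glue_nonneg hl (nonneg_gQ2 hl) nonneg_zf ht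
  · funext j; fin_cases j <;> simp [mY, glue_nonpos (le_refl (0:ℝ))]
  · intro j
    fin_cases j
    · simp only [mY, Matrix.cons_val_zero]
      exact glue_monotoneOn hl (mono_mQ1 hl) mono_cv1 (match_mQ1_cv1 hl) (match_cv1_mQ1 hl)
        (by rw [val_mQ1_inv hl]; exact le_of_lt (v2_pos hl)) (le_of_lt (v1_pos hl))
    · simp only [mY, Matrix.cons_val_one, Matrix.head_cons]
      exact glue_monotoneOn hl mono_cv1 (mono_mP2 hl) (match_cv1_mP2 hl) (match_mP2_cv1 hl)
        (le_of_lt (v1_pos hl)) (by rw [val_mP2_inv hl]; exact le_of_lt (v2_pos hl))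
  · intro t ht
    rw [mv (-l) (mY l t)]
    funext j; fin_cases j
    · show glue l (gQ1 l) (gP1 l) t
        = glue l (FF1 l) (FF1 l) t + (glue l (mQ1 l) (cv1 l) t + -l * glue l (cv1 l) (mP2 l) t)
      exact glue_identity hl (-l) (bid1Q hl) (bid1P hl) t
    · show glue l (gQ2 l) zf t
        = glue l (FF2 l) (FF2 l) t + (glue l (mQ1 l) (cv1 l) t + glue l (cv1 l) (mP2 l) t)
      have e1 : ∀ s : ℝ, gQ2 l s = FF2 l s + (mQ1 l s + 1 * cv1 l s) := by
        intro s; rw [one_mul]; exact bid2Q hl s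
      have e2 : ∀ s : ℝ, zf s = FF2 l s + (cv1 l s + 1 * mP2 l s) := by
        intro s; rw [one_mul]; exact bid2P hl s
      have h := glue_identity hl 1 e1 e2 t
      rw [h]; ring
  · intro j s t hs hst
    fin_cases j
    · intro hpos
      have hpos' : ∀ r ∈ Icc s t, 0 < glue l (gQ1 l) (gP1 l) r := by
        intro r hr
        have := hpos r hr
        simpa [gY] using this
      have := glue_compl hl (match_gQ1 hl) (match_gP1 hl) (match_mQ1_cv1 hl) (match_cv1_mQ1 hl)
        (compl_gQ1_mQ1 hl) (fun _ _ _ _ _ _ => rfl) (Or.inr (val_gP1_one hl)) s t hs hst hpos'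
      simpa [mY] using this
    · intro hpos
      have hpos' : ∀ r ∈ Icc s t, 0 < glue l (gQ2 l) zf r := by
        intro r hr
        have := hpos r hr
        simpa [gY] using this
      have := glue_compl hl (match_gQ2_zf hl) (match_zf_gQ2 hl) (match_cv1_mP2 hl)
        (match_mP2_cv1 hl) (fun _ _ _ _ _ _ => rfl) compl_zf_absurd
        (Or.inr rfl) s t hs hst hpos'
      simpa [mY] using this

end

end SkorokhodCE


theorem counterexample_general (a : ℝ) (ha : a < -1) :
    ∃ f : ℝ → Fin 2 → ℝ, ContinuousOn f (Set.Ici 0) ∧ (∀ j, 0 ≤ f 0 j) ∧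
      ∃ g m gbar mbar : ℝ → Fin 2 → ℝ,
        IsSkorokhod (!![1, a; 1, 1]) f g m ∧
        IsSkorokhod (!![1, a; 1, 1]) f gbar mbar ∧
        ∃ t ∈ Set.Ici (0:ℝ), g t ≠ gbar t := by
  have hl : 1 < -a := by linarith
  have hX := SkorokhodCE.skX hl
  have hY := SkorokhodCE.skY hl
  rw [show -(-a) = a by ring] at hX hY
  refine ⟨SkorokhodCE.fv (-a), ?_, ?_, SkorokhodCE.gX (-a), SkorokhodCE.mX (-a),
    SkorokhodCE.gY (-a), SkorokhodCE.mY (-a), hX, hY, 1, by norm_num, ?_⟩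
  · apply continuousOn_pi.2
    intro i; fin_cases i
    · simpa [SkorokhodCE.fv] using SkorokhodCE.glue_continuousOn hl SkorokhodCE.cont_FF1
        SkorokhodCE.cont_FF1 (SkorokhodCE.match_FF1 hl) (SkorokhodCE.match_FF1 hl)
    · simpa [SkorokhodCE.fv] using SkorokhodCE.glue_continuousOn hl SkorokhodCE.cont_FF2
        SkorokhodCE.cont_FF2 (SkorokhodCE.match_FF2 hl) (SkorokhodCE.match_FF2 hl)
  · intro j
    fin_cases j <;> simp [SkorokhodCE.fv, SkorokhodCE.glue_nonpos (le_refl (0:ℝ))]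
  · intro hEq
    have h0 := congrFun hEq 0
    simp only [SkorokhodCE.gX, SkorokhodCE.gY, Matrix.cons_val_zero] at h0
    rw [SkorokhodCE.glue_ge_one le_rfl, SkorokhodCE.glue_ge_one le_rfl,
      SkorokhodCE.val_gP1_one hl, SkorokhodCE.val_gQ1_one hl] at h0
    exact absurd h0 (by norm_num)
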